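/- Let T be strictly increasing and càdlàg on [0,∞) with continuous right-continuous inverse A. Suppose [g', d') (or (g',d')) is a maximal interval on which a given càdlàg path X∘A differs from a fixed point o, arising as the image under the time change of an excursion interval of X. Then the corresponding excursion interval of X is [A(g'), A(d')) (respectively (A(g'), A(d'))); i.e., applying A to the endpoints of an excursion interval of the time-changed path recovers the original excursion interval. -/

import Mathlib

open Filter Set
open scoped NNReal Topology

/-- The right-continuous inverse `A(u) := inf{t ≥ 0 : T(t) > u}`. -/
noncomputable def rcInv (T : ℝ≥0 → ℝ≥0) (u : ℝ≥0) : ℝ≥0 :=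
  sInf {t | T t > u}

/-- `(g,d)` is an (open) excursion interval of `X` away from `o`: `X ≠ o` on
`(g,d)` and both endpoints belong to the zero set of `X` (maximality). -/
def IsExcOpen {S : Type*} (X : ℝ≥0 → S) (o : S) (g d : ℝ≥0) : Prop :=
  g < d ∧ (∀ t, g < t → t < d → X t ≠ o) ∧ X g = o ∧ X d = o

/-- `[g,d)` is a (half-open) excursion interval of `X` away from `o`: `X ≠ o` on
`[g,d)`, `X d = o`, and `g` is approximated from the left by zeros of `X`
(maximality at the left endpoint). -/
def IsExcHalf {S : Type*} (X : ℝ≥0 → S) (o : S) (g d : ℝ≥0) : Prop :=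
  g < d ∧ (∀ t, g ≤ t → t < d → X t ≠ o) ∧ X d = o ∧
    ∀ ε : ℝ≥0, 0 < ε → ∃ s, s < g ∧ g < s + ε ∧ X s = o

lemma rcInv_set_nonempty {T : ℝ≥0 → ℝ≥0} (htop : Tendsto T atTop atTop) (u : ℝ≥0) :
    {t | T t > u}.Nonempty :=
  (htop.eventually_gt_atTop u).exists

lemma rcInv_mono {T : ℝ≥0 → ℝ≥0} (htop : Tendsto T atTop atTop) : Monotone (rcInv T) := by
  intro u v huv
  exact csInf_le_csInf (OrderBot.bddBelow _) (rcInv_set_nonempty htop v)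
    (fun t ht => lt_of_le_of_lt huv ht)

lemma rcInv_apply_T {T : ℝ≥0 → ℝ≥0} (hstrict : StrictMono T) (t : ℝ≥0) :
    rcInv T (T t) = t := by
  have h : {s | T s > T t} = Ioi t := by
    ext s; simp [hstrict.lt_iff_lt]
  rw [rcInv, h, csInf_Ioi]

lemma T_le_of_lt_rcInv {T : ℝ≥0 → ℝ≥0} {t u : ℝ≥0} (h : t < rcInv T u) : T t ≤ u := by
  by_contra h'
  push_neg at h'
  have hle : rcInv T u ≤ t := csInf_le (OrderBot.bddBelow _) (show t ∈ {s | T s > u} from h')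
  exact absurd hle (not_le.2 h)

lemma rcInv_left {T : ℝ≥0 → ℝ≥0} (hstrict : StrictMono T)
    {g ε : ℝ≥0} (hε : 0 < ε) (hg : 0 < g) :
    ∃ u, u < g ∧ rcInv T g < rcInv T u + ε := by
  by_contra h
  push_neg at h
  -- h : ∀ u < g, rcInv T u + ε ≤ rcInv T g
  have hA0 : ∀ u, u < g → rcInv T u ≤ rcInv T g - ε := fun u hu =>
    le_tsub_of_add_le_right (h u hu)
  have hεA : ε ≤ rcInv T g := le_trans (le_add_self) (h 0 hg)
  have hlt : rcInv T g - ε < rcInv T g := tsub_lt_self (lt_of_lt_of_le hε hεA) hε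
  obtain ⟨t₂, ht₂1, ht₂2⟩ := exists_between hlt
  obtain ⟨t₁, ht₁1, ht₁2⟩ := exists_between ht₂1
  have key : ∀ t, rcInv T g - ε < t → t < rcInv T g → T t = g := by
    intro t h1 h2
    refine le_antisymm (T_le_of_lt_rcInv h2) ?_
    by_contra hc
    push_neg at hc
    have hAt : rcInv T (T t) ≤ rcInv T g - ε := hA0 _ hc
    rw [rcInv_apply_T hstrict] at hAt
    exact absurd hAt (not_le.2 h1)
  have e1 := key t₁ ht₁1 (ht₁2.trans ht₂2)
  have e2 := key t₂ (ht₁1.trans ht₁2) ht₂2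
  exact absurd (e1.trans e2.symm) (ne_of_lt (hstrict ht₁2))

/-- Let `T` be strictly increasing and càdlàg with continuous
right-continuous inverse `A`, and let `X* = X ∘ A` be the time-changed path.  If
`(g',d')` (resp. `[g',d')`) is an excursion interval of `X*` away from `o`, then
the corresponding excursion interval of `X` is `(A(g'), A(d'))` (resp.
`[A(g'), A(d'))`): applying `A` to the endpoints recovers the original
excursion interval. -/
theorem stmt13
    {S : Type*} (o : S) (X : ℝ≥0 → S)
    (T : ℝ≥0 → ℝ≥0)
    (hstrict : StrictMono T)
    (hrc : ∀ t, ContinuousWithinAt T (Set.Ici t) t)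
    (htop : Tendsto T atTop atTop) :
    ∀ g' d' : ℝ≥0,
      (IsExcOpen (fun u => X (rcInv T u)) o g' d' →
        IsExcOpen X o (rcInv T g') (rcInv T d')) ∧
      (IsExcHalf (fun u => X (rcInv T u)) o g' d' →
        IsExcHalf X o (rcInv T g') (rcInv T d')) := by
  have hA : Monotone (rcInv T) := rcInv_mono htop
  intro g' d'
  constructor
  · rintro ⟨hgd, hne, hXg, hXd⟩
    obtain ⟨u, hu1, hu2⟩ := exists_between hgd
    have h1 : rcInv T g' < rcInv T u := by
      refine lt_of_le_of_ne (hA hu1.le) (fun h => hne u hu1 hu2 ?_)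
      show X (rcInv T u) = o
      rw [← h]; exact hXg
    refine ⟨h1.trans_le (hA hu2.le), ?_, hXg, hXd⟩
    intro t ht1 ht2
    have hg'T : g' < T t := by
      by_contra hc
      push_neg at hc
      have := hA hc
      rw [rcInv_apply_T hstrict] at this
      exact absurd ht1 (not_lt.2 this)
    have hTd : T t < d' := by
      by_contra hc
      push_neg at hc
      have := hA hc
      rw [rcInv_apply_T hstrict] at this
      exact absurd ht2 (not_lt.2 this)
    exact fun hE => hne (T t) hg'T hTd (by show X (rcInv T (T t)) = o; rw [rcInv_apply_T hstrict]; exact hE)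
  · rintro ⟨hgd, hne, hXd, happrox⟩
    have hXg : X (rcInv T g') ≠ o := hne g' le_rfl hgd
    have hAgd : rcInv T g' < rcInv T d' := by
      refine lt_of_le_of_ne (hA hgd.le) (fun h => hXg ?_)
      rw [h]; exact hXd
    refine ⟨hAgd, ?_, hXd, ?_⟩
    · intro t ht1 ht2
      rcases le_or_gt g' (T t) with h | h
      · have hTd : T t < d' := by
          by_contra hc
          push_neg at hc
          have := hA hc
          rw [rcInv_apply_T hstrict] at this
          exact absurd ht2 (not_lt.2 this)
        exact fun hE => hne (T t) h hTd (by show X (rcInv T (T t)) = o; rw [rcInv_apply_T hstrict]; exact hE)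
      · have ht : t ≤ rcInv T g' := by
          have := hA h.le
          rwa [rcInv_apply_T hstrict] at this
        have heq : t = rcInv T g' := le_antisymm ht ht1
        rw [heq]; exact hXg
    · intro ε hε
      have hg0 : 0 < g' := by
        obtain ⟨s, hs, -, -⟩ := happrox 1 one_pos
        exact lt_of_le_of_lt (zero_le : (0:ℝ≥0) ≤ s) hs
      obtain ⟨u₀, hu₀, hu₀'⟩ := rcInv_left hstrict hε hg0
      have hδ : 0 < g' - u₀ := tsub_pos_of_lt hu₀
      obtain ⟨s, hs1, hs2, hs3⟩ := happrox (g' - u₀) hδ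
      have hus : u₀ ≤ s := by
        by_contra hc
        push_neg at hc
        have : s + (g' - u₀) ≤ g' := by
          calc s + (g' - u₀) ≤ u₀ + (g' - u₀) := add_le_add_left hc.le _
          _ = g' := add_tsub_cancel_of_le hu₀.le
        exact absurd hs2 (not_lt.2 this)
      refine ⟨rcInv T s, ?_, ?_, hs3⟩
      · refine lt_of_le_of_ne (hA hs1.le) (fun h => hXg ?_)
        rw [← h]; exact hs3
      · exact hu₀'.trans_le (add_le_add_left (hA hus) ε)
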